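/- As formal power series, φ(-q) = E(q)^2 / E(q^2), where φ(q) = ∑_{n∈ℤ} q^{n^2} and E(q) = ∏_{k≥1}(1-q^k). -/

import Mathlib

/-- `E d` is the formal power series `E(q^d) = ∏_{k≥1} (1 - q^(d*k))` over `ℤ`;
the `m`-th coefficient equals that of the finite partial product up to `k = m+1`. -/
noncomputable def E (d : ℕ) : PowerSeries ℤ :=
  PowerSeries.mk fun m =>
    PowerSeries.coeff m (∏ k ∈ Finset.range (m + 1), (1 - PowerSeries.X ^ (d * (k + 1))))

/-- `phiNeg d` is the formal power series `φ(-q^d)` where `φ(q) = ∑_{n∈ℤ} q^(n^2)`: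
the coefficient of `q^m` is `(-1)^(m/d)` times the number of integers `n` with `n^2 = m/d`
when `d ∣ m`, and `0` otherwise. -/
noncomputable def phiNeg (d : ℕ) : PowerSeries ℤ :=
  PowerSeries.mk fun m =>
    if d ∣ m then
      (-1 : ℤ) ^ (m / d) *
        (((Finset.Icc (-((m / d : ℕ) : ℤ)) ((m / d : ℕ) : ℤ)).filter
            (fun n => n ^ 2 = ((m / d : ℕ) : ℤ))).card : ℤ)
    else 0


open PowerSeries Finset

noncomputable section PhiAux

/-- partial product `∏_{j=1}^m (1 - X^j)` -/
def pp (m : ℕ) : PowerSeries ℤ := ∏ j ∈ Finset.range m, (1 - PowerSeries.X ^ (j + 1))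

/-- partial product `∏_{j=1}^m (1 - X^(d j))` -/
def ppd (d m : ℕ) : PowerSeries ℤ :=
  ∏ j ∈ Finset.range m, (1 - PowerSeries.X ^ (d * (j + 1)))

/-- partial product `∏_{j=1}^m (1 - X^(2j-1))` -/
def podd (m : ℕ) : PowerSeries ℤ := ∏ j ∈ Finset.range m, (1 - PowerSeries.X ^ (2 * j + 1))

/-- Gaussian binomial `[m, r]_q` as a power series, defined by the Pascal rule. -/
def gb : ℕ → ℤ → PowerSeries ℤ
  | 0, r => if r = 0 then 1 else 0
  | (m+1), r => gb m r + PowerSeries.X ^ ((m + 1 - r).toNat) * gb m (r - 1)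

lemma gb_eq_zero : ∀ (m : ℕ) (r : ℤ), (r < 0 ∨ (m : ℤ) < r) → gb m r = 0 := by
  intro m
  induction m with
  | zero =>
    intro r hr
    have h : ¬ (r = 0) := by push_cast at hr; omega
    simp only [gb, if_neg h]
  | succ m ih =>
    intro r hr
    have h1 : gb m r = 0 := ih r (by push_cast at hr ⊢; omega)
    have h2 : gb m (r - 1) = 0 := ih (r - 1) (by push_cast at hr ⊢; omega)
    simp [gb, h1, h2]

lemma gb_zero (m : ℕ) : gb m 0 = 1 := by
  induction m with
  | zero => simp [gb]
  | succ m ih => simp [gb, ih, gb_eq_zero m (-1) (by omega)]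

lemma gb_self (m : ℕ) : gb m m = 1 := by
  induction m with
  | zero => simp [gb]
  | succ m ih =>
    have h1 : gb m (m + 1) = 0 := gb_eq_zero m _ (by omega)
    have h2 : ((m : ℤ) + 1 - (m + 1)).toNat = 0 := by omega
    show gb m ((m : ℤ) + 1) + _ ^ ((m : ℤ) + 1 - ((m : ℕ) + 1 : ℕ)).toNat * gb m (((m : ℕ) + 1 : ℕ) - 1) = 1
    push_cast
    rw [h1, h2, add_sub_cancel_right, ih]
    simp

end PhiAux
noncomputable section PhiAux2
open PowerSeries

lemma gb_aux : ∀ (m : ℕ) (r : ℤ),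
    (1 - PowerSeries.X ^ r.toNat) * gb m r
      = (1 - PowerSeries.X ^ ((m + 1 - r).toNat)) * gb m (r - 1) := by
  intro m
  induction m with
  | zero =>
    intro r
    rcases eq_or_ne r 0 with h | h
    · subst h; simp [gb, gb_eq_zero 0 (-1) (by omega)]
    rcases eq_or_ne r 1 with h1 | h1
    · subst h1; norm_num [gb]
    · rw [gb_eq_zero 0 r (by simp [gb] at *; omega),
        gb_eq_zero 0 (r - 1) (by push_cast; omega), mul_zero, mul_zero]
  | succ m ih =>
    intro r
    have hL : gb (m + 1) r = gb m r + X ^ (((m:ℤ) + 1 - r).toNat) * gb m (r - 1) := rfl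
    have hR : gb (m + 1) (r - 1)
        = gb m (r - 1) + X ^ (((m:ℤ) + 2 - r).toNat) * gb m (r - 2) := by
      have e : ((m:ℤ) + 1 - (r - 1)).toNat = ((m:ℤ) + 2 - r).toNat := by omega
      have e2 : r - 1 - 1 = r - 2 := by ring
      show gb m (r - 1) + X ^ (((m:ℤ) + 1 - (r - 1)).toNat) * gb m (r - 1 - 1) = _
      rw [e, e2]
    have hcast : (((m + 1 : ℕ) : ℤ) + 1 - r).toNat = ((m:ℤ) + 2 - r).toNat := by
      push_cast; omega
    show (1 - X ^ r.toNat) * gb (m + 1) r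
        = (1 - X ^ ((((m + 1 : ℕ) : ℤ) + 1 - r).toNat)) * gb (m + 1) (r - 1)
    rw [hcast, hL, hR]
    rcases le_or_gt r 0 with hr | hr
    · rw [gb_eq_zero m (r-1) (by omega), gb_eq_zero m (r-2) (by omega),
        show r.toNat = 0 by omega, pow_zero]
      ring
    rcases le_or_gt r ((m : ℤ) + 1) with hr2 | hr2
    · have ih1 := ih r
      have ih2 := ih (r - 1)
      have h2 : ((m : ℤ) + 1 - (r - 1)).toNat = ((m : ℤ) + 2 - r).toNat := by omega
      have e2 : r - 1 - 1 = r - 2 := by ring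
      rw [h2, e2] at ih2
      have e1 : X ^ (((m:ℤ) + 1 - r).toNat) * (X ^ r.toNat : PowerSeries ℤ)
          = X ^ (((m:ℤ) + 2 - r).toNat) * X ^ ((r - 1).toNat) := by
        rw [← pow_add, ← pow_add]; congr 1; omega
      linear_combination ih1 + X ^ (((m:ℤ) + 2 - r).toNat) * ih2 - gb m (r - 1) * e1
    · rw [gb_eq_zero m r (by omega), gb_eq_zero m (r-1) (by omega)]
      rcases eq_or_lt_of_le (show (m:ℤ) + 1 + 1 ≤ r by omega) with hr3 | hr3
      · rw [show ((m:ℤ) + 2 - r).toNat = 0 by omega, pow_zero]; ring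
      · rw [gb_eq_zero m (r-2) (by omega)]; ring

/-- second Pascal rule -/
lemma gb_pascal2 (m : ℕ) (r : ℤ) :
    gb (m + 1) r = PowerSeries.X ^ r.toNat * gb m r + gb m (r - 1) := by
  have h := gb_aux m r
  show gb m r + X ^ ((m + 1 - r).toNat) * gb m (r - 1) = _
  linear_combination h

/-- double Pascal rule -/
lemma gb_double (n : ℕ) (r : ℤ) :
    gb (2 * n + 2) r
      = PowerSeries.X ^ r.toNat * gb (2 * n) r
        + gb (2 * n) (r - 1)
        + PowerSeries.X ^ ((2 * n + 2 - r).toNat) * gb (2 * n) (r - 1)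
        + PowerSeries.X ^ ((2 * n + 2 - r).toNat) * PowerSeries.X ^ ((2 * n + 2 - r).toNat)
            * gb (2 * n) (r - 2) := by
  have h1 : gb (2 * n + 2) r
      = gb (2 * n + 1) r + X ^ ((2 * n + 2 - r : ℤ).toNat) * gb (2 * n + 1) (r - 1) := by
    show gb (2*n+1) r + X ^ (((2*n+1 : ℕ) : ℤ) + 1 - r).toNat * gb (2*n+1) (r - 1) = _
    congr 3 <;> push_cast <;> ring_nf
  have h2 := gb_pascal2 (2 * n) r
  have h3 : gb (2 * n + 1) (r - 1)
      = gb (2 * n) (r - 1) + X ^ ((2 * n + 2 - r : ℤ).toNat) * gb (2 * n) (r - 2) := by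
    show gb (2*n) (r-1) + X ^ (((2*n : ℕ) : ℤ) + 1 - (r-1)).toNat * gb (2*n) (r - 1 - 1) = _
    congr 2
    · congr 1; push_cast; omega
    · congr 1; ring
  rw [h1, h2, h3]
  push_cast
  ring

end PhiAux2
noncomputable section PhiAux3
open PowerSeries

lemma pp_succ (m : ℕ) : pp (m + 1) = pp m * (1 - X ^ (m + 1)) := Finset.prod_range_succ _ m

lemma gb_pp : ∀ (m r : ℕ), r ≤ m → gb m (r : ℤ) * (pp r * pp (m - r)) = pp m := by
  intro m
  induction m with
  | zero => intro r hr; interval_cases r; simp [gb, pp]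
  | succ m ih =>
    intro r hr
    rcases Nat.eq_zero_or_pos r with h0 | h0
    · subst h0
      rw [show ((0:ℕ):ℤ) = 0 from rfl, gb_zero]
      simp [pp]
    rcases eq_or_lt_of_le hr with hme | hlt
    · subst hme
      rw [gb_self (m+1)]
      simp [pp]
    have hrm : r ≤ m := by omega
    have hL : gb (m + 1) (r : ℤ)
        = gb m (r : ℤ) + X ^ (m + 1 - r) * gb m ((r - 1 : ℕ) : ℤ) := by
      show gb m (r : ℤ) + X ^ (((m:ℤ) + 1 - r).toNat) * gb m ((r : ℤ) - 1) = _
      rw [show ((m:ℤ) + 1 - r).toNat = m + 1 - r by omega,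
        show ((r:ℤ) - 1) = ((r - 1 : ℕ) : ℤ) by omega]
    have hpp1 : pp (m + 1 - r) = pp (m - r) * (1 - X ^ (m + 1 - r)) := by
      rw [show m + 1 - r = (m - r) + 1 by omega, pp_succ, show m - r + 1 = m + 1 - r by omega]
    have hpp2 : pp r = pp (r - 1) * (1 - X ^ r) := by
      rw [show r = (r - 1) + 1 by omega]
      rw [pp_succ, show r - 1 + 1 = r by omega]
    have ih1 := ih r hrm
    have ih2 := ih (r - 1) (by omega)
    rw [show m - (r - 1) = m + 1 - r by omega, hpp1] at ih2
    rw [hpp2] at ih1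
    have epow : X ^ (m + 1 - r) * (X ^ r : PowerSeries ℤ) = X ^ (m + 1) := by
      rw [← pow_add]; congr 1; omega
    rw [hL, pp_succ, hpp1, hpp2]
    linear_combination (1 - X ^ (m + 1 - r)) * ih1 + X ^ (m + 1 - r) * (1 - X ^ r) * ih2
      - pp m * epow

end PhiAux3
noncomputable section PhiAux4
open PowerSeries

lemma dvd_prod_sub_one {s : Finset ℕ} {c : ℕ} {f : ℕ → PowerSeries ℤ}
    (h : ∀ j ∈ s, (X : PowerSeries ℤ) ^ c ∣ f j - 1) :
    (X : PowerSeries ℤ) ^ c ∣ (∏ j ∈ s, f j) - 1 := by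
  induction s using Finset.cons_induction with
  | empty => simp
  | cons a s ha ih =>
    rw [Finset.prod_cons]
    have h1 : f a * (∏ j ∈ s, f j) - 1
        = f a * ((∏ j ∈ s, f j) - 1) + (f a - 1) := by ring
    rw [h1]
    exact dvd_add (Dvd.dvd.mul_left (ih fun j hj => h j (Finset.mem_cons.2 (Or.inr hj))) _)
      (h a (Finset.mem_cons_self a s))

lemma pp_factor {a b : ℕ} (h : a ≤ b) :
    pp b = pp a * ∏ j ∈ Finset.Ico a b, (1 - X ^ (j + 1)) := by
  rw [pp, pp, ← Finset.prod_range_mul_prod_Ico _ h]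

lemma dvd_pp_tail {a b : ℕ} (h : a ≤ b) :
    (X : PowerSeries ℤ) ^ (a + 1) ∣ (∏ j ∈ Finset.Ico a b, (1 - X ^ (j + 1))) - 1 := by
  apply dvd_prod_sub_one
  intro j hj
  rw [Finset.mem_Ico] at hj
  have : (1 : PowerSeries ℤ) - X ^ (j + 1) - 1 = -(X ^ (j+1)) := by ring
  rw [this]
  exact dvd_neg.2 (pow_dvd_pow _ (by omega))

lemma constantCoeff_pp (m : ℕ) : constantCoeff (pp m) = 1 := by
  rw [pp, map_prod]
  apply Finset.prod_eq_one
  intro j _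
  rw [map_sub, map_one, map_pow, constantCoeff_X, zero_pow (by omega), sub_zero]

lemma pp_ne_zero (m : ℕ) : pp m ≠ 0 := by
  intro h
  have := constantCoeff_pp m
  rw [h, map_zero] at this
  exact one_ne_zero (α := ℤ) this.symm

/-- tail estimate: `gb (2n) r * pp (2n) ≡ 1 mod X^(min r (2n-r) + 1)` -/
lemma gb_tail (n r : ℕ) (h : r ≤ 2 * n) :
    (X : PowerSeries ℤ) ^ (min r (2 * n - r) + 1) ∣ gb (2 * n) (r : ℤ) * pp (2 * n) - 1 := by
  set A := ∏ j ∈ Finset.Ico r (2 * n), (1 - (X : PowerSeries ℤ) ^ (j + 1)) with hA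
  set B := ∏ j ∈ Finset.Ico (2 * n - r) (2 * n), (1 - (X : PowerSeries ℤ) ^ (j + 1)) with hB
  have hgA : gb (2 * n) (r : ℤ) * pp (2 * n - r) = A := by
    have h1 := gb_pp (2 * n) r h
    have h2 : pp (2 * n) = pp r * A := pp_factor h
    rw [h2] at h1
    have := mul_left_cancel₀ (pp_ne_zero r) (by linear_combination h1 : pp r * (gb (2*n) (r:ℤ) * pp (2*n - r)) = pp r * A)
    exact this
  have hgB : gb (2 * n) (r : ℤ) * pp (2 * n) = A * B := by
    have h2 : pp (2 * n) = pp (2 * n - r) * B := pp_factor (by omega)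
    rw [h2, ← mul_assoc, hgA]
  rw [hgB]
  have hd1 : (X : PowerSeries ℤ) ^ (min r (2*n-r) + 1) ∣ A - 1 :=
    dvd_trans (pow_dvd_pow _ (by omega)) (dvd_pp_tail h)
  have hd2 : (X : PowerSeries ℤ) ^ (min r (2*n-r) + 1) ∣ B - 1 :=
    dvd_trans (pow_dvd_pow _ (by omega)) (dvd_pp_tail (by omega))
  have : A * B - 1 = (A - 1) * B + (B - 1) := by ring
  rw [this]
  exact dvd_add (Dvd.dvd.mul_right hd1 _) hd2

end PhiAux4
noncomputable section PhiAux5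
open PowerSeries

def sgn (k : ℤ) : ℤ := if Even k then 1 else -1

lemma sgn_sub_one (k : ℤ) : sgn (k - 1) = -sgn k := by
  have hpar : Even (k - 1) ↔ ¬ Even k := by
    rw [Int.even_iff, Int.even_iff]; omega
  rcases Int.even_or_odd k with h | h
  · rw [sgn, sgn, if_pos h, if_neg (by rw [hpar]; simpa using h)]
  · have h1 : ¬ Even k := by rw [Int.even_iff]; rw [Int.odd_iff] at h; omega
    rw [sgn, sgn, if_neg h1, if_pos (hpar.2 h1)]
    norm_num

lemma sgn_add_one (k : ℤ) : sgn (k + 1) = -sgn k := by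
  have := sgn_sub_one (k + 1)
  rw [add_sub_cancel_right] at this
  linarith [this]

/-- summand of the finite theta sum -/
def Wterm (n : ℕ) (k : ℤ) : PowerSeries ℤ :=
  PowerSeries.C (sgn k) * PowerSeries.X ^ ((k ^ 2).toNat) * gb (2 * n) ((n : ℤ) + k)

def W (n : ℕ) : PowerSeries ℤ := ∑ᶠ k : ℤ, Wterm n k

lemma gb_bounds {m : ℕ} {r : ℤ} (h : gb m r ≠ 0) : 0 ≤ r ∧ r ≤ (m : ℤ) := by
  by_contra hc
  exact h (gb_eq_zero m r (by omega))

lemma Wterm_support (n : ℕ) :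
    (Function.support (Wterm n)).Finite := by
  apply Set.Finite.subset (Finset.Icc (-(n:ℤ)) n).finite_toSet
  intro k hk
  simp only [Finset.coe_Icc, Set.mem_Icc]
  by_contra hc
  apply hk
  rw [Wterm, gb_eq_zero (2*n) ((n:ℤ) + k) (by push_cast at hc ⊢; omega), mul_zero]

lemma W_zero : W 0 = 1 := by
  rw [W, finsum_eq_single _ (0 : ℤ)]
  · norm_num [Wterm, sgn, gb_zero]
  · intro k hk
    rw [Wterm, gb_eq_zero (2*0) (((0:ℕ):ℤ) + k) (by push_cast; omega), mul_zero]

end PhiAux5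
noncomputable section PhiAux6
open PowerSeries

def T1 (n : ℕ) (k : ℤ) : PowerSeries ℤ :=
  PowerSeries.C (sgn k) * (PowerSeries.X ^ ((k ^ 2).toNat) * PowerSeries.X ^ (((n:ℤ) + 1 + k).toNat))
    * gb (2 * n) ((n : ℤ) + 1 + k)

def T3 (n : ℕ) (k : ℤ) : PowerSeries ℤ :=
  PowerSeries.C (sgn k) * (PowerSeries.X ^ ((k ^ 2).toNat) * PowerSeries.X ^ (((n:ℤ) + 1 - k).toNat))
    * gb (2 * n) ((n : ℤ) + k)

def T4 (n : ℕ) (k : ℤ) : PowerSeries ℤ :=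
  PowerSeries.C (sgn k) *
    (PowerSeries.X ^ ((k ^ 2).toNat) *
      (PowerSeries.X ^ (((n:ℤ) + 1 - k).toNat) * PowerSeries.X ^ (((n:ℤ) + 1 - k).toNat)))
    * gb (2 * n) ((n : ℤ) + k - 1)

lemma T1_support (n : ℕ) : (Function.support (T1 n)).Finite := by
  apply Set.Finite.subset (Finset.Icc (-(n:ℤ) - 1) ((n:ℤ) + 1)).finite_toSet
  intro k hk
  simp only [Finset.coe_Icc, Set.mem_Icc]
  by_contra hc
  exact hk (by rw [T1, gb_eq_zero (2*n) ((n:ℤ) + 1 + k) (by push_cast at hc ⊢; omega), mul_zero])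

lemma T3_support (n : ℕ) : (Function.support (T3 n)).Finite := by
  apply Set.Finite.subset (Finset.Icc (-(n:ℤ) - 1) ((n:ℤ) + 1)).finite_toSet
  intro k hk
  simp only [Finset.coe_Icc, Set.mem_Icc]
  by_contra hc
  exact hk (by rw [T3, gb_eq_zero (2*n) ((n:ℤ) + k) (by push_cast at hc ⊢; omega), mul_zero])

lemma T4_support (n : ℕ) : (Function.support (T4 n)).Finite := by
  apply Set.Finite.subset (Finset.Icc (-(n:ℤ) - 1) ((n:ℤ) + 2)).finite_toSet
  intro k hk
  simp only [Finset.coe_Icc, Set.mem_Icc]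
  by_contra hc
  exact hk (by rw [T4, gb_eq_zero (2*n) ((n:ℤ) + k - 1) (by push_cast at hc ⊢; omega), mul_zero])

lemma Wterm_split (n : ℕ) (k : ℤ) :
    Wterm (n + 1) k = T1 n k + (Wterm n k + (T3 n k + T4 n k)) := by
  have e1 : 2 * (n + 1) = 2 * n + 2 := by ring
  have e2 : (((n + 1 : ℕ)) : ℤ) + k = (n:ℤ) + 1 + k := by push_cast; ring
  rw [Wterm, e1, e2, gb_double n ((n:ℤ) + 1 + k),
    show (n:ℤ) + 1 + k - 1 = (n:ℤ) + k by ring,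
    show (n:ℤ) + 1 + k - 2 = (n:ℤ) + k - 1 by ring,
    show 2 * (n:ℤ) + 2 - ((n:ℤ) + 1 + k) = (n:ℤ) + 1 - k by ring]
  rw [T1, T3, T4, Wterm]
  ring

lemma T1_shift (n : ℕ) (j : ℤ) : T1 n (j - 1) = (-1 : PowerSeries ℤ) * T3 n j := by
  by_cases hg : gb (2 * n) ((n:ℤ) + j) = 0
  · rw [T1, T3, show (n:ℤ) + 1 + (j - 1) = (n:ℤ) + j by ring, hg, mul_zero, mul_zero, mul_zero]
  · obtain ⟨hb1, hb2⟩ := gb_bounds hg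
    push_cast at hb2
    rw [T1, T3, show (n:ℤ) + 1 + (j - 1) = (n:ℤ) + j by ring, sgn_sub_one, map_neg]
    have hsq : (j - 1) ^ 2 = j ^ 2 - 2 * j + 1 := by ring
    have hexp : (PowerSeries.X : PowerSeries ℤ) ^ (((j - 1) ^ 2).toNat) * PowerSeries.X ^ (((n:ℤ) + j).toNat)
        = PowerSeries.X ^ ((j ^ 2).toNat) * PowerSeries.X ^ (((n:ℤ) + 1 - j).toNat) := by
      rw [← pow_add, ← pow_add]
      congr 1
      have h0 : 0 ≤ j ^ 2 := sq_nonneg j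
      have h1 : 0 ≤ (j - 1) ^ 2 := sq_nonneg (j - 1)
      omega
    rw [hexp]
    ring

lemma T4_shift (n : ℕ) (j : ℤ) :
    T4 n (j + 1) = (-(PowerSeries.X ^ (2 * n + 1)) : PowerSeries ℤ) * Wterm n j := by
  by_cases hg : gb (2 * n) ((n:ℤ) + j) = 0
  · rw [T4, Wterm, show (n:ℤ) + (j + 1) - 1 = (n:ℤ) + j by ring, hg, mul_zero, mul_zero, mul_zero]
  · obtain ⟨hb1, hb2⟩ := gb_bounds hg
    push_cast at hb2
    rw [T4, Wterm, show (n:ℤ) + (j + 1) - 1 = (n:ℤ) + j by ring, sgn_add_one, map_neg,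
      show (n:ℤ) + 1 - (j + 1) = (n:ℤ) - j by ring]
    have hsq : (j + 1) ^ 2 = j ^ 2 + 2 * j + 1 := by ring
    have hexp : (PowerSeries.X : PowerSeries ℤ) ^ (((j + 1) ^ 2).toNat) *
          ((PowerSeries.X : PowerSeries ℤ) ^ (((n:ℤ) - j).toNat) * PowerSeries.X ^ (((n:ℤ) - j).toNat))
        = PowerSeries.X ^ (2 * n + 1) * PowerSeries.X ^ ((j ^ 2).toNat) := by
      rw [← pow_add, ← pow_add, ← pow_add]
      congr 1
      have h0 : 0 ≤ j ^ 2 := sq_nonneg j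
      have h1 : 0 ≤ (j + 1) ^ 2 := sq_nonneg (j + 1)
      omega
    rw [hexp]
    ring

lemma support_add_fin {f g : ℤ → PowerSeries ℤ} (hf : (Function.support f).Finite)
    (hg : (Function.support g).Finite) :
    (Function.support (fun k => f k + g k)).Finite := by
  apply Set.Finite.subset (hf.union hg)
  intro k hk
  by_contra hc
  simp only [Set.mem_union, Function.mem_support, not_or, not_not] at hc
  exact hk (by simp only [Function.mem_support, hc.1, hc.2, add_zero, not_not])

lemma W_succ (n : ℕ) : W (n + 1) = (1 - PowerSeries.X ^ (2 * n + 1)) * W n := by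
  have F1 := T1_support n
  have F2 := Wterm_support n
  have F3 := T3_support n
  have F4 := T4_support n
  have bij1 : Function.Bijective (fun k : ℤ => k - 1) :=
    ⟨fun a b h => by simpa using h, fun b => ⟨b + 1, by ring⟩⟩
  have bij2 : Function.Bijective (fun k : ℤ => k + 1) :=
    ⟨fun a b h => by simpa using h, fun b => ⟨b - 1, by ring⟩⟩
  have h13 : ∑ᶠ k, T1 n k = (-1 : PowerSeries ℤ) * ∑ᶠ k, T3 n k := by
    rw [mul_finsum _ _, ← finsum_comp (g := T1 n) (fun k : ℤ => k - 1) bij1]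
    exact finsum_congr (fun j => T1_shift n j)
  have h44 : ∑ᶠ k, T4 n k = (-(PowerSeries.X ^ (2 * n + 1)) : PowerSeries ℤ) * W n := by
    rw [W, mul_finsum _ _, ← finsum_comp (g := T4 n) (fun k : ℤ => k + 1) bij2]
    exact finsum_congr (fun j => T4_shift n j)
  have hW : W (n + 1)
      = ∑ᶠ k, T1 n k + (∑ᶠ k, Wterm n k + (∑ᶠ k, T3 n k + ∑ᶠ k, T4 n k)) := by
    rw [W, finsum_congr (Wterm_split n),
      finsum_add_distrib F1 (support_add_fin F2 (support_add_fin F3 F4)),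
      finsum_add_distrib F2 (support_add_fin F3 F4),
      finsum_add_distrib F3 F4]
  rw [hW, h13, h44, ← W]
  ring

lemma W_eq_podd (n : ℕ) : W n = podd n := by
  induction n with
  | zero => rw [W_zero]; simp [podd]
  | succ n ih =>
    rw [W_succ, ih]
    have h : podd (n + 1) = podd n * (1 - PowerSeries.X ^ (2 * n + 1)) :=
      Finset.prod_range_succ _ n
    rw [h]
    ring

end PhiAux6
noncomputable section PhiAux7
open PowerSeries

lemma coeff_eq_of_dvd {f g : PowerSeries ℤ} {c m : ℕ}
    (h : (PowerSeries.X : PowerSeries ℤ) ^ c ∣ f - g) (hm : m < c) :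
    PowerSeries.coeff m f = PowerSeries.coeff m g := by
  have h2 := (PowerSeries.X_pow_dvd_iff.1 h) m hm
  rw [map_sub] at h2
  exact sub_eq_zero.1 h2

lemma ppd_dvd {d a b : ℕ} (hd : 1 ≤ d) (h : a ≤ b) :
    (PowerSeries.X : PowerSeries ℤ) ^ (a + 1) ∣ ppd d b - ppd d a := by
  rw [ppd, ppd, ← Finset.prod_range_mul_prod_Ico _ h]
  have e : (∏ j ∈ Finset.range a, (1 - (PowerSeries.X : PowerSeries ℤ) ^ (d * (j + 1)))) *
        (∏ j ∈ Finset.Ico a b, (1 - (PowerSeries.X : PowerSeries ℤ) ^ (d * (j + 1))))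
      - ∏ j ∈ Finset.range a, (1 - PowerSeries.X ^ (d * (j + 1)))
      = (∏ j ∈ Finset.range a, (1 - PowerSeries.X ^ (d * (j + 1)))) *
        ((∏ j ∈ Finset.Ico a b, (1 - PowerSeries.X ^ (d * (j + 1)))) - 1) := by ring
  rw [e]
  apply Dvd.dvd.mul_left
  apply dvd_prod_sub_one
  intro j hj
  rw [Finset.mem_Ico] at hj
  have e2 : (1 : PowerSeries ℤ) - PowerSeries.X ^ (d * (j + 1)) - 1
      = -(PowerSeries.X ^ (d * (j + 1))) := by ring
  rw [e2]
  apply dvd_neg.2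
  apply pow_dvd_pow
  calc a + 1 ≤ j + 1 := by omega
  _ ≤ d * (j + 1) := Nat.le_mul_of_pos_left (j + 1) hd

lemma coeff_E (d m : ℕ) :
    PowerSeries.coeff m (E d) = PowerSeries.coeff m (ppd d (m + 1)) := by
  rw [E, PowerSeries.coeff_mk, ppd]

lemma coeff_E_stab (d m L : ℕ) (hd : 1 ≤ d) (hL : m + 1 ≤ L) :
    PowerSeries.coeff m (E d) = PowerSeries.coeff m (ppd d L) := by
  rw [coeff_E]
  exact (coeff_eq_of_dvd (ppd_dvd hd hL) (by omega)).symm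

lemma ppd_one (m : ℕ) : ppd 1 m = pp m := by simp [ppd, pp, one_mul]

lemma pp_split (n : ℕ) : pp (2 * n) = podd n * ppd 2 n := by
  induction n with
  | zero => simp [pp, podd, ppd]
  | succ n ih =>
    have h1 : pp (2 * (n + 1)) = pp (2 * n) * (1 - PowerSeries.X ^ (2 * n + 1))
        * (1 - PowerSeries.X ^ (2 * n + 2)) := by
      rw [show 2 * (n + 1) = (2 * n + 1) + 1 by ring, pp_succ,
        show (2 * n + 1 : ℕ) = (2 * n) + 1 from rfl, pp_succ]
    have h2 : podd (n + 1) = podd n * (1 - PowerSeries.X ^ (2 * n + 1)) :=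
      Finset.prod_range_succ _ n
    have h3 : ppd 2 (n + 1) = ppd 2 n * (1 - PowerSeries.X ^ (2 * (n + 1))) :=
      Finset.prod_range_succ _ n
    rw [h1, h2, h3, ih, show 2 * (n + 1) = 2 * n + 2 by ring]
    ring

lemma int_le_sq (k : ℤ) : k ≤ k ^ 2 ∧ -k ≤ k ^ 2 := by
  constructor
  · rcases le_or_gt k 0 with h | h
    · calc k ≤ 0 := h
      _ ≤ k ^ 2 := sq_nonneg k
    · nlinarith
  · rcases le_or_gt 0 k with h | h
    · calc -k ≤ 0 := by omega
      _ ≤ k ^ 2 := sq_nonneg k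
    · nlinarith

def Tsum (n : ℕ) : PowerSeries ℤ :=
  ∑ k ∈ Finset.Icc (-(n:ℤ)) (n:ℤ), PowerSeries.C (sgn k) * PowerSeries.X ^ ((k ^ 2).toNat)

lemma W_as_sum (n : ℕ) : W n = ∑ k ∈ Finset.Icc (-(n:ℤ)) (n:ℤ), Wterm n k := by
  apply finsum_eq_sum_of_support_subset
  intro k hk
  simp only [Finset.coe_Icc, Set.mem_Icc]
  by_contra hc
  exact hk (by rw [Wterm, gb_eq_zero (2*n) ((n:ℤ) + k) (by push_cast at hc ⊢; omega), mul_zero])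

lemma core_dvd {N n : ℕ} (hn : N + 1 ≤ n) :
    (PowerSeries.X : PowerSeries ℤ) ^ (N + 1) ∣ Tsum n - W n * pp (2 * n) := by
  rw [W_as_sum, Finset.sum_mul, Tsum, ← Finset.sum_sub_distrib]
  apply Finset.dvd_sum
  intro k hk
  simp only [Finset.mem_Icc] at hk
  have hterm : PowerSeries.C (sgn k) * PowerSeries.X ^ ((k ^ 2).toNat)
        - Wterm n k * pp (2 * n)
      = PowerSeries.C (sgn k) * (PowerSeries.X ^ ((k ^ 2).toNat)
        * (1 - gb (2 * n) ((n:ℤ) + k) * pp (2 * n))) := by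
    rw [Wterm]; ring
  rw [hterm]
  apply Dvd.dvd.mul_left
  have hsq := int_le_sq k
  have hsqn : 0 ≤ k ^ 2 := sq_nonneg k
  by_cases hbig : N + 1 ≤ (k ^ 2).toNat
  · exact ((pow_dvd_pow (PowerSeries.X : PowerSeries ℤ) hbig).mul_right _)
  · set r := ((n:ℤ) + k).toNat with hrdef
    have hr : ((n:ℤ) + k) = (r : ℤ) := by omega
    have hrle : r ≤ 2 * n := by omega
    have ht := gb_tail n r hrle
    have hd2 : (PowerSeries.X : PowerSeries ℤ) ^ (min r (2 * n - r) + 1)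
        ∣ 1 - gb (2 * n) ((n:ℤ) + k) * pp (2 * n) := by
      rw [hr, show (1 : PowerSeries ℤ) - gb (2*n) (r:ℤ) * pp (2*n)
        = -(gb (2*n) (r:ℤ) * pp (2*n) - 1) by ring]
      exact dvd_neg.2 ht
    calc (PowerSeries.X : PowerSeries ℤ) ^ (N + 1)
        ∣ PowerSeries.X ^ ((k ^ 2).toNat + (min r (2 * n - r) + 1)) :=
          pow_dvd_pow _ (by omega)
      _ = PowerSeries.X ^ ((k ^ 2).toNat) * PowerSeries.X ^ (min r (2 * n - r) + 1) :=
          pow_add _ _ _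
      _ ∣ PowerSeries.X ^ ((k ^ 2).toNat) * (1 - gb (2 * n) ((n:ℤ) + k) * pp (2 * n)) :=
          mul_dvd_mul_left _ hd2

end PhiAux7
noncomputable section PhiAux8
open PowerSeries

lemma sgn_of_sq {z : ℤ} {m : ℕ} (h : z ^ 2 = (m : ℤ)) : sgn z = (-1 : ℤ) ^ m := by
  have hpar : Even z ↔ Even m := by
    rw [← Int.even_pow' (n := 2) (by omega), h, Int.even_coe_nat]
  rcases Nat.even_or_odd m with hm | hm
  · rw [sgn, if_pos (hpar.2 hm), hm.neg_one_pow]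
  · have hnm : ¬ Even m := by rw [Nat.even_iff]; rw [Nat.odd_iff] at hm; omega
    rw [sgn, if_neg (fun hc => hnm (hpar.1 hc)), hm.neg_one_pow]

lemma coeff_Tsum {N n m : ℕ} (hn : N + 1 ≤ n) (hm : m ≤ N) :
    PowerSeries.coeff m (Tsum n)
      = (-1 : ℤ) ^ m *
        (((Finset.Icc (-(m : ℤ)) (m : ℤ)).filter (fun z => z ^ 2 = (m : ℤ))).card : ℤ) := by
  rw [Tsum, map_sum]
  have h1 : ∀ k ∈ Finset.Icc (-(n:ℤ)) (n:ℤ),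
      PowerSeries.coeff m (PowerSeries.C (sgn k) * PowerSeries.X ^ ((k ^ 2).toNat))
        = if k ^ 2 = (m : ℤ) then sgn k else 0 := by
    intro k _
    rw [PowerSeries.coeff_C_mul, PowerSeries.coeff_X_pow]
    have hsqn : 0 ≤ k ^ 2 := sq_nonneg k
    by_cases h : k ^ 2 = (m : ℤ)
    · rw [if_pos h, if_pos (by omega), mul_one]
    · rw [if_neg h, if_neg (by omega), mul_zero]
  rw [Finset.sum_congr rfl h1, ← Finset.sum_filter]
  have h2 : (Finset.Icc (-(n:ℤ)) (n:ℤ)).filter (fun k => k ^ 2 = (m : ℤ))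
      = (Finset.Icc (-(m : ℤ)) (m : ℤ)).filter (fun z => z ^ 2 = (m : ℤ)) := by
    apply Finset.ext
    intro z
    simp only [Finset.mem_filter, Finset.mem_Icc]
    constructor
    · rintro ⟨⟨hz1, hz2⟩, hz⟩
      have := int_le_sq z
      exact ⟨⟨by omega, by omega⟩, hz⟩
    · rintro ⟨⟨hz1, hz2⟩, hz⟩
      have := int_le_sq z
      exact ⟨⟨by omega, by omega⟩, hz⟩
  rw [h2]
  rw [Finset.sum_congr rfl (fun z hz => sgn_of_sq (Finset.mem_filter.1 hz).2)]
  rw [Finset.sum_const, nsmul_eq_mul]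
  ring

lemma coeff_phiNeg (m : ℕ) :
    PowerSeries.coeff m (phiNeg 1)
      = (-1 : ℤ) ^ m *
        (((Finset.Icc (-(m : ℤ)) (m : ℤ)).filter (fun z => z ^ 2 = (m : ℤ))).card : ℤ) := by
  rw [phiNeg, PowerSeries.coeff_mk, if_pos (one_dvd m), Nat.div_one]

lemma coeff_mul_congr {f f' g g' : PowerSeries ℤ} {N : ℕ}
    (hf : ∀ i ≤ N, PowerSeries.coeff i f = PowerSeries.coeff i f')
    (hg : ∀ i ≤ N, PowerSeries.coeff i g = PowerSeries.coeff i g') :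
    PowerSeries.coeff N (f * g) = PowerSeries.coeff N (f' * g') := by
  rw [PowerSeries.coeff_mul, PowerSeries.coeff_mul]
  apply Finset.sum_congr rfl
  intro p hp
  rw [Finset.HasAntidiagonal.mem_antidiagonal] at hp
  rw [hf p.1 (by omega), hg p.2 (by omega)]

end PhiAux8


/-- As formal power series, `φ(-q) = E(q)^2 / E(q^2)`, stated multiplicatively
as `φ(-q) · E(q^2) = E(q)^2`. -/
theorem phiNeg_eq : phiNeg 1 * E 2 = (E 1) ^ 2 := by
  apply PowerSeries.ext
  intro N
  set n : ℕ := N + 1 with hn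
  have hnN : N + 1 ≤ n := le_refl _
  have h1 : PowerSeries.coeff N (phiNeg 1 * E 2)
      = PowerSeries.coeff N (Tsum n * ppd 2 n) := by
    apply coeff_mul_congr
    · intro i hi
      rw [coeff_phiNeg, coeff_Tsum hnN hi]
    · intro i hi
      exact coeff_E_stab 2 i n (by omega) (by omega)
  have h2 : PowerSeries.coeff N (Tsum n * ppd 2 n)
      = PowerSeries.coeff N ((W n * pp (2 * n)) * ppd 2 n) := by
    apply coeff_eq_of_dvd (c := N + 1) _ (by omega)
    have e : Tsum n * ppd 2 n - (W n * pp (2 * n)) * ppd 2 n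
        = (Tsum n - W n * pp (2 * n)) * ppd 2 n := by ring
    rw [e]
    exact (core_dvd hnN).mul_right _
  have h3 : (W n * pp (2 * n)) * ppd 2 n = pp (2 * n) * pp (2 * n) := by
    rw [W_eq_podd]
    linear_combination (-(pp (2 * n))) * (pp_split n)
  have h4 : PowerSeries.coeff N ((E 1) ^ 2)
      = PowerSeries.coeff N (pp (2 * n) * pp (2 * n)) := by
    rw [pow_two]
    apply coeff_mul_congr <;>
    · intro i hi
      rw [coeff_E_stab 1 i (2 * n) (le_refl 1) (by omega), ppd_one]
  rw [h1, h2, h3, h4]
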